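/- Let N ≥ 1 and let A be an N-by-N complex matrix. Let ‖·‖ denote the sup-norm on matrix entries and let ρ(A) = max{ |α| : α ∈ ℂ is an eigenvalue of A } be the spectral radius of A. Then there exists an integer k with 0 ≤ k ≤ N − 1 such that (2^{1/N} − 1)·‖A^{k+1}‖ ≤ ρ(A)·‖A^k‖. -/

import Mathlib

/-- The sup-norm `‖A‖ = max_{i,j} |a_{ij}|` of a complex matrix. -/
noncomputable def supNormC {N : ℕ} (A : Matrix (Fin N) (Fin N) ℂ) : ℝ :=
  Finset.univ.fold max 0 fun i : Fin N =>
    Finset.univ.fold max 0 fun j : Fin N => ‖A i j‖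

/-- The spectral radius of a complex matrix: the maximum absolute value of its
eigenvalues, i.e. of the roots of its characteristic polynomial. -/
noncomputable def specRad {N : ℕ} (A : Matrix (Fin N) (Fin N) ℂ) : ℝ :=
  (A.charpoly.roots.map (fun z : ℂ => ‖z‖)).fold max 0

namespace Statement11Aux

lemma supNormC_nonneg {N : ℕ} (A : Matrix (Fin N) (Fin N) ℂ) : 0 ≤ supNormC A :=
  (Finset.le_fold_max _).mpr (Or.inl le_rfl)

lemma abs_entry_le {N : ℕ} (A : Matrix (Fin N) (Fin N) ℂ) (i j : Fin N) :
    ‖A i j‖ ≤ supNormC A :=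
  (Finset.le_fold_max _).mpr (Or.inr ⟨i, Finset.mem_univ i,
    (Finset.le_fold_max _).mpr (Or.inr ⟨j, Finset.mem_univ j, le_rfl⟩)⟩)

lemma supNormC_le {N : ℕ} {A : Matrix (Fin N) (Fin N) ℂ} {m : ℝ} (hm : 0 ≤ m)
    (h : ∀ i j, ‖A i j‖ ≤ m) : supNormC A ≤ m :=
  (Finset.fold_max_le _).mpr ⟨hm, fun i _ => (Finset.fold_max_le _).mpr ⟨hm, fun j _ => h i j⟩⟩

lemma multiset_fold_max_nonneg (s : Multiset ℝ) : 0 ≤ s.fold max 0 := by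
  induction s using Multiset.induction_on with
  | empty => simp
  | cons a s ih => rw [Multiset.fold_cons_left]; exact le_max_of_le_right ih

lemma multiset_le_fold_max {s : Multiset ℝ} {a : ℝ} (h : a ∈ s) : a ≤ s.fold max 0 := by
  induction s using Multiset.induction_on with
  | empty => simp at h
  | cons b s ih =>
    rw [Multiset.fold_cons_left]
    rcases Multiset.mem_cons.mp h with h | h
    · exact h ▸ le_max_left _ _
    · exact le_max_of_le_right (ih h)

lemma specRad_nonneg {N : ℕ} (A : Matrix (Fin N) (Fin N) ℂ) : 0 ≤ specRad A :=
  multiset_fold_max_nonneg _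

lemma root_abs_le {N : ℕ} (A : Matrix (Fin N) (Fin N) ℂ) {x : ℂ}
    (hx : x ∈ A.charpoly.roots) : ‖x‖ ≤ specRad A :=
  multiset_le_fold_max (Multiset.mem_map_of_mem _ hx)

lemma abs_multiset_sum (s : Multiset ℂ) :
    ‖s.sum‖ ≤ (s.map (fun z : ℂ => ‖z‖)).sum := by
  induction s using Multiset.induction_on with
  | empty => simp
  | cons a s ih =>
    rw [Multiset.sum_cons, Multiset.map_cons, Multiset.sum_cons]
    exact (norm_add_le _ _).trans (by linarith)

lemma abs_multiset_prod (s : Multiset ℂ) :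
    ‖s.prod‖ = (s.map (fun z : ℂ => ‖z‖)).prod := by
  induction s using Multiset.induction_on with
  | empty => simp
  | cons a s ih =>
    rw [Multiset.prod_cons, Multiset.map_cons, Multiset.prod_cons, norm_mul, ih]

lemma prod_abs_le_pow {ρ : ℝ} (hρ : 0 ≤ ρ) (t : Multiset ℂ)
    (h : ∀ x ∈ t, ‖x‖ ≤ ρ) :
    (t.map (fun z : ℂ => ‖z‖)).prod ≤ ρ ^ Multiset.card t := by
  induction t using Multiset.induction_on with
  | empty => simp
  | cons a t ih =>
    rw [Multiset.map_cons, Multiset.prod_cons, Multiset.card_cons, pow_succ']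
    have h1 : ‖a‖ ≤ ρ := h a (Multiset.mem_cons_self _ _)
    have h2 : (t.map (fun z : ℂ => ‖z‖)).prod ≤ ρ ^ Multiset.card t :=
      ih fun x hx => h x (Multiset.mem_cons_of_mem hx)
    have h3 : 0 ≤ (t.map (fun z : ℂ => ‖z‖)).prod :=
      Multiset.prod_nonneg (by
        intro x hx
        obtain ⟨y, _, rfl⟩ := Multiset.mem_map.mp hx
        exact norm_nonneg y)
    exact mul_le_mul h1 h2 h3 hρ

lemma esymm_abs_le {s : Multiset ℂ} {ρ : ℝ} (hρ : 0 ≤ ρ)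
    (h : ∀ x ∈ s, ‖x‖ ≤ ρ) (n : ℕ) :
    ‖s.esymm n‖ ≤ ((Multiset.card s).choose n : ℝ) * ρ ^ n := by
  unfold Multiset.esymm
  calc ‖((s.powersetCard n).map Multiset.prod).sum‖
      ≤ (((s.powersetCard n).map Multiset.prod).map (fun z : ℂ => ‖z‖)).sum :=
        abs_multiset_sum _
    _ ≤ ((s.powersetCard n).map fun _ => ρ ^ n).sum := by
        rw [Multiset.map_map]
        apply Multiset.sum_map_le_sum_map
        intro t ht
        obtain ⟨hts, htc⟩ := Multiset.mem_powersetCard.mp ht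
        have := prod_abs_le_pow hρ t fun x hx => h x (Multiset.mem_of_le hts hx)
        rw [htc] at this
        calc ‖t.prod‖ = (t.map (fun z : ℂ => ‖z‖)).prod := abs_multiset_prod t
          _ ≤ ρ ^ n := this
    _ = (Multiset.card (s.powersetCard n)) • ρ ^ n := by
        rw [Multiset.map_const', Multiset.sum_replicate]
    _ = ((Multiset.card s).choose n : ℝ) * ρ ^ n := by
        rw [Multiset.card_powersetCard, nsmul_eq_mul]

end Statement11Aux

open Statement11Aux in
/-- For `N ≥ 1` and an `N×N` complex matrix `A`, there is a
`k` with `0 ≤ k ≤ N − 1` such that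
`(2^{1/N} − 1)·‖A^{k+1}‖ ≤ ρ(A)·‖A^k‖`. -/
theorem statement11 (N : ℕ) (hN : 1 ≤ N) (A : Matrix (Fin N) (Fin N) ℂ) :
    ∃ k : ℕ, k ≤ N - 1 ∧
      ((2 : ℝ) ^ ((1 : ℝ) / N) - 1) * supNormC (A ^ (k + 1)) ≤
        specRad A * supNormC (A ^ k) := by
  by_contra hcon
  push_neg at hcon
  set c : ℝ := (2 : ℝ) ^ ((1 : ℝ) / N) - 1 with hc_def
  set ρ : ℝ := specRad A with hρ_def
  have hρ : 0 ≤ ρ := specRad_nonneg A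
  have hNR : (0 : ℝ) < (N : ℝ) := by exact_mod_cast hN
  have hc : 0 < c := by
    have : (1 : ℝ) < (2 : ℝ) ^ ((1 : ℝ) / N) :=
      (Real.one_lt_rpow_iff_of_pos (by norm_num)).mpr
        (Or.inl ⟨by norm_num, by positivity⟩)
    simpa [hc_def] using sub_pos.mpr this
  have h : ∀ k ≤ N - 1, ρ * supNormC (A ^ k) < c * supNormC (A ^ (k + 1)) := hcon
  -- positivity of ‖A^N‖
  have hANpos : 0 < supNormC (A ^ N) := by
    have h1 := h (N - 1) le_rfl
    rw [show N - 1 + 1 = N from by omega] at h1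
    nlinarith [supNormC_nonneg (A ^ (N - 1)), supNormC_nonneg (A ^ N),
      mul_nonneg hρ (supNormC_nonneg (A ^ (N - 1)))]
  -- the chain of inequalities
  have chain : ∀ d, 1 ≤ d → d ≤ N →
      ρ ^ d * supNormC (A ^ (N - d)) < c ^ d * supNormC (A ^ N) := by
    intro d hd
    induction d, hd using Nat.le_induction with
    | base =>
      intro _
      have h1 := h (N - 1) le_rfl
      rw [show N - 1 + 1 = N from by omega] at h1
      simpa using h1
    | succ d hd ih =>
      intro hdN
      have h1 := h (N - (d + 1)) (by omega)
      rw [show N - (d + 1) + 1 = N - d from by omega] at h1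
      calc ρ ^ (d + 1) * supNormC (A ^ (N - (d + 1)))
          = ρ ^ d * (ρ * supNormC (A ^ (N - (d + 1)))) := by ring
        _ ≤ ρ ^ d * (c * supNormC (A ^ (N - d))) :=
            mul_le_mul_of_nonneg_left h1.le (pow_nonneg hρ d)
        _ = c * (ρ ^ d * supNormC (A ^ (N - d))) := by ring
        _ < c * (c ^ d * supNormC (A ^ N)) :=
            mul_lt_mul_of_pos_left (ih (by omega)) hc
        _ = c ^ (d + 1) * supNormC (A ^ N) := by ring
  -- charpoly facts
  set p := A.charpoly with hp_def
  have hmonic : p.Monic := A.charpoly_monic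
  have hdeg : p.natDegree = N := by
    rw [hp_def, Matrix.charpoly_natDegree_eq_dim, Fintype.card_fin]
  have hsplits : p.Splits := IsAlgClosed.splits p
  have hcard : Multiset.card p.roots = p.natDegree :=
    (Polynomial.splits_iff_card_roots.mp hsplits)
  have hroot : ∀ x ∈ p.roots, ‖x‖ ≤ ρ := fun x hx => root_abs_le A hx
  have hcoeff : ∀ j < N, ‖p.coeff j‖ ≤ (N.choose (N - j) : ℝ) * ρ ^ (N - j) := by
    intro j hj
    rw [Polynomial.coeff_eq_esymm_roots_of_card hcard (by omega : j ≤ p.natDegree)]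
    rw [hmonic.leadingCoeff, hdeg]
    have := esymm_abs_le hρ hroot (N - j)
    rw [hcard, hdeg] at this
    calc ‖1 * (-1) ^ (N - j) * p.roots.esymm (N - j)‖
        = ‖p.roots.esymm (N - j)‖ := by
          rw [norm_mul, norm_mul, norm_pow]
          simp
      _ ≤ (N.choose (N - j) : ℝ) * ρ ^ (N - j) := this
  -- Cayley–Hamilton
  have hCH : A ^ N = -∑ i ∈ Finset.range N, p.coeff i • A ^ i := by
    have h0 : (Polynomial.aeval A) p = 0 := A.aeval_self_charpoly
    rw [Polynomial.aeval_eq_sum_range, hdeg, Finset.sum_range_succ,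
      show p.coeff N = 1 from by rw [← hdeg]; exact hmonic.coeff_natDegree,
      one_smul] at h0
    exact (eq_neg_of_add_eq_zero_right h0)
  -- norm bound from Cayley–Hamilton
  have hbound : supNormC (A ^ N) ≤
      ∑ i ∈ Finset.range N, ‖p.coeff i‖ * supNormC (A ^ i) := by
    apply supNormC_le
    · exact Finset.sum_nonneg fun i _ =>
        mul_nonneg (norm_nonneg _) (supNormC_nonneg _)
    intro a b
    rw [hCH]
    calc ‖(-∑ i ∈ Finset.range N, p.coeff i • A ^ i) a b‖
        = ‖∑ i ∈ Finset.range N, p.coeff i * (A ^ i) a b‖ := by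
          rw [Matrix.neg_apply, norm_neg, Matrix.sum_apply]
          simp [Matrix.smul_apply, smul_eq_mul]
      _ ≤ ∑ i ∈ Finset.range N, ‖p.coeff i * (A ^ i) a b‖ :=
          norm_sum_le _ _
      _ ≤ ∑ i ∈ Finset.range N, ‖p.coeff i‖ * supNormC (A ^ i) := by
          apply Finset.sum_le_sum
          intro i _
          rw [norm_mul]
          exact mul_le_mul_of_nonneg_left (abs_entry_le _ a b) (norm_nonneg _)
  -- the binomial sum equals 1
  have h2pow : ((1 : ℝ) + c) ^ N = 2 := by
    have h1c : (1 : ℝ) + c = (2 : ℝ) ^ ((1 : ℝ) / N) := by rw [hc_def]; ring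
    rw [h1c, ← Real.rpow_natCast ((2:ℝ) ^ ((1:ℝ)/N)) N, ← Real.rpow_mul (by norm_num),
      one_div, inv_mul_cancel₀ (ne_of_gt hNR), Real.rpow_one]
  have hsum : ∑ i ∈ Finset.range N, (N.choose (N - i) : ℝ) * c ^ (N - i) = 1 := by
    have h1 : ∑ i ∈ Finset.range N, (N.choose (N - i) : ℝ) * c ^ (N - i)
        = ∑ i ∈ Finset.range N, (N.choose (i + 1) : ℝ) * c ^ (i + 1) := by
      rw [← Finset.sum_range_reflect]
      apply Finset.sum_congr rfl
      intro i hi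
      have hi' := Finset.mem_range.mp hi
      rw [show N - (N - 1 - i) = i + 1 from by omega]
    have h2 : ∑ i ∈ Finset.range (N + 1), (N.choose i : ℝ) * c ^ i = ((1:ℝ) + c) ^ N := by
      rw [add_comm (1:ℝ) c, add_pow]
      apply Finset.sum_congr rfl
      intro i _
      simp [mul_comm]
    have h3 := Finset.sum_range_succ' (fun i => (N.choose i : ℝ) * c ^ i) N
    rw [h2] at h3
    rw [h1]
    have : ((1:ℝ) + c) ^ N = (∑ i ∈ Finset.range N, (N.choose (i+1) : ℝ) * c ^ (i+1)) + 1 := by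
      rw [h3]; simp
    linarith [this, h2pow]
  -- final contradiction
  have final : supNormC (A ^ N) < supNormC (A ^ N) := by
    calc supNormC (A ^ N)
        ≤ ∑ i ∈ Finset.range N, ‖p.coeff i‖ * supNormC (A ^ i) := hbound
      _ ≤ ∑ i ∈ Finset.range N, (N.choose (N - i) : ℝ) * (ρ ^ (N - i) * supNormC (A ^ i)) := by
          apply Finset.sum_le_sum
          intro i hi
          have h1 := hcoeff i (Finset.mem_range.mp hi)
          calc ‖p.coeff i‖ * supNormC (A ^ i)
              ≤ ((N.choose (N - i) : ℝ) * ρ ^ (N - i)) * supNormC (A ^ i) :=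
                mul_le_mul_of_nonneg_right h1 (supNormC_nonneg _)
            _ = (N.choose (N - i) : ℝ) * (ρ ^ (N - i) * supNormC (A ^ i)) := by ring
      _ < ∑ i ∈ Finset.range N, (N.choose (N - i) : ℝ) * (c ^ (N - i) * supNormC (A ^ N)) := by
          apply Finset.sum_lt_sum_of_nonempty
          · exact ⟨0, Finset.mem_range.mpr (by omega)⟩
          intro i hi
          have hi' := Finset.mem_range.mp hi
          have hch : (0 : ℝ) < (N.choose (N - i) : ℝ) := by
            exact_mod_cast Nat.choose_pos (by omega : N - i ≤ N)
          have hch2 := chain (N - i) (by omega) (by omega)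
          rw [show N - (N - i) = i from by omega] at hch2
          exact mul_lt_mul_of_pos_left hch2 hch
      _ = (∑ i ∈ Finset.range N, (N.choose (N - i) : ℝ) * c ^ (N - i)) * supNormC (A ^ N) := by
          rw [Finset.sum_mul]
          apply Finset.sum_congr rfl
          intro i _
          ring
      _ = supNormC (A ^ N) := by rw [hsum, one_mul]
  exact lt_irrefl _ final
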